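/- arXiv:2307.03052 — 4 statements merged into one kernel-verified Lean document; each statement's English description precedes it below -/
import Mathlib

section
/- Let X, Y be n×n real matrices with Y symmetric and X symmetric positive definite. Denote by λ_min and λ_max the smallest and largest eigenvalues of X. Then tr((XY)^2) ≥ (λ_min/λ_max)^2 · ‖XY‖^2, where ‖·‖ is the Frobenius norm. -/
open Matrix

private lemma frob_eq_trace {n : ℕ} (M : Matrix (Fin n) (Fin n) ℝ) :
    ∑ i, ∑ j, (M i j) ^ 2 = Matrix.trace (M * Mᵀ) := by
  simp [Matrix.trace, Matrix.mul_apply, pow_two]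

private lemma aux_key {n : ℕ} (U Y : Matrix (Fin n) (Fin n) ℝ) (d : Fin n → ℝ)
    (hU1 : Uᵀ * U = 1) (hY : Yᵀ = Y)
    (lmin lmax : ℝ) (hlo : ∀ i, lmin ≤ d i) (hhi : ∀ i, d i ≤ lmax) (h0 : 0 < lmin) :
    (lmin / lmax) ^ 2 * ∑ i, ∑ j, (((U * diagonal d * Uᵀ) * Y) i j) ^ 2 ≤
      Matrix.trace (((U * diagonal d * Uᵀ) * Y) ^ 2) := by
  classical
  have hU2 : U * Uᵀ = 1 := mul_eq_one_comm.mp hU1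
  set B : Matrix (Fin n) (Fin n) ℝ := Uᵀ * Y * U with hB
  have hBs : ∀ i j, B j i = B i j := by
    intro i j
    have h : Bᵀ = B := by
      rw [hB, Matrix.transpose_mul, Matrix.transpose_mul, Matrix.transpose_transpose, hY,
        Matrix.mul_assoc]
    exact congrFun (congrFun h i) j
  set C : Matrix (Fin n) (Fin n) ℝ := diagonal d * B with hC
  have hA : (U * diagonal d * Uᵀ) * Y = U * C * Uᵀ := by
    rw [hC, hB]
    calc U * diagonal d * Uᵀ * Y
        = U * (diagonal d * (Uᵀ * (Y * (U * Uᵀ)))) := by rw [hU2]; simp [Matrix.mul_assoc]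
    _ = U * (diagonal d * (Uᵀ * Y * U)) * Uᵀ := by simp [Matrix.mul_assoc]
    _ = U * (diagonal d * (Uᵀ * Y * U)) * Uᵀ := rfl
  have hconj : ∀ E F : Matrix (Fin n) (Fin n) ℝ,
      Matrix.trace (U * E * Uᵀ * (U * F * Uᵀ)) = Matrix.trace (E * F) := by
    intro E F
    have : U * E * Uᵀ * (U * F * Uᵀ) = U * (E * F) * Uᵀ := by
      calc U * E * Uᵀ * (U * F * Uᵀ)
          = U * (E * ((Uᵀ * U) * (F * Uᵀ))) := by simp only [Matrix.mul_assoc]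
      _ = U * (E * F) * Uᵀ := by rw [hU1]; simp [Matrix.mul_assoc]
    rw [this, Matrix.trace_mul_comm, ← Matrix.mul_assoc, hU1, Matrix.one_mul]
  have hCe : ∀ i j, C i j = d i * B i j := by
    intro i j
    simp [hC, Matrix.mul_apply, Matrix.diagonal_apply, Finset.sum_ite_eq, ite_mul]
  have htr : Matrix.trace (((U * diagonal d * Uᵀ) * Y) ^ 2)
      = ∑ i, ∑ j, (d i * d j) * (B i j) ^ 2 := by
    rw [hA, pow_two, hconj, Matrix.trace]
    simp only [Matrix.diag_apply, Matrix.mul_apply]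
    apply Finset.sum_congr rfl; intro i _
    apply Finset.sum_congr rfl; intro j _
    rw [hCe i j, hCe j i, hBs i j]; ring
  have hfr : ∑ i, ∑ j, (((U * diagonal d * Uᵀ) * Y) i j) ^ 2
      = ∑ i, ∑ j, (d i)^2 * (B i j) ^ 2 := by
    rw [frob_eq_trace, hA]
    have hAT : (U * C * Uᵀ)ᵀ = U * Cᵀ * Uᵀ := by
      rw [Matrix.transpose_mul, Matrix.transpose_mul, Matrix.transpose_transpose,
        Matrix.mul_assoc]
    rw [hAT, hconj, Matrix.trace]
    simp only [Matrix.diag_apply, Matrix.mul_apply, Matrix.transpose_apply]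
    apply Finset.sum_congr rfl; intro i _
    apply Finset.sum_congr rfl; intro j _
    rw [hCe i j]; ring
  rw [htr, hfr, Finset.mul_sum]
  apply Finset.sum_le_sum
  intro i _
  rw [Finset.mul_sum]
  apply Finset.sum_le_sum
  intro j _
  have hmaxpos : 0 < lmax := lt_of_lt_of_le h0 (le_trans (hlo i) (hhi i))
  have key : (lmin / lmax) ^ 2 * (d i) ^ 2 ≤ d i * d j := by
    rw [div_pow, div_mul_eq_mul_div, div_le_iff₀ (by positivity)]
    have h1 : lmin ^ 2 ≤ d i * d j := by
      rw [pow_two]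
      exact mul_le_mul (hlo i) (hlo j) h0.le (le_trans h0.le (hlo i))
    have h2 : d i ^ 2 ≤ lmax ^ 2 := by
      rw [pow_two, pow_two]
      exact mul_le_mul (hhi i) (hhi i) (le_trans h0.le (hlo i)) hmaxpos.le
    have e1 : lmin ^ 2 * d i ^ 2 ≤ lmin ^ 2 * lmax ^ 2 :=
      mul_le_mul_of_nonneg_left h2 (sq_nonneg _)
    have e2 : lmin ^ 2 * lmax ^ 2 ≤ (d i * d j) * lmax ^ 2 :=
      mul_le_mul_of_nonneg_right h1 (sq_nonneg _)
    linarith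
  calc (lmin / lmax) ^ 2 * ((d i) ^ 2 * (B i j) ^ 2)
      = ((lmin / lmax) ^ 2 * (d i) ^ 2) * (B i j) ^ 2 := by ring
  _ ≤ (d i * d j) * (B i j) ^ 2 := mul_le_mul_of_nonneg_right key (sq_nonneg _)

/-- For n×n real matrices with `Y` symmetric and `X` symmetric positive definite,
`tr((XY)^2) ≥ (λ_min/λ_max)^2 ‖XY‖²` (Frobenius norm). -/
theorem stmt0 {n : ℕ} (X Y : Matrix (Fin n) (Fin n) ℝ)
    (hY : Y.IsSymm) (hX : X.PosDef)
    (lmin lmax : ℝ)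
    (hmin : IsLeast (Set.range hX.1.eigenvalues) lmin)
    (hmax : IsGreatest (Set.range hX.1.eigenvalues) lmax) :
    (lmin / lmax) ^ 2 * ∑ i, ∑ j, ((X * Y) i j) ^ 2 ≤ Matrix.trace ((X * Y) ^ 2) := by
  classical
  have hU1 : (↑hX.1.eigenvectorUnitary : Matrix (Fin n) (Fin n) ℝ)ᵀ *
      (↑hX.1.eigenvectorUnitary : Matrix (Fin n) (Fin n) ℝ) = 1 := by
    have := Unitary.coe_star_mul_self hX.1.eigenvectorUnitary
    rw [← Matrix.conjTranspose_eq_transpose_of_trivial]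
    exact_mod_cast this
  have hXspec : X = (↑hX.1.eigenvectorUnitary : Matrix (Fin n) (Fin n) ℝ) *
      diagonal hX.1.eigenvalues * (↑hX.1.eigenvectorUnitary : Matrix (Fin n) (Fin n) ℝ)ᵀ := by
    have h := hX.1.spectral_theorem
    rw [Unitary.conjStarAlgAut_apply, Matrix.star_eq_conjTranspose, Matrix.conjTranspose_eq_transpose_of_trivial] at h
    simpa [RCLike.ofReal_real_eq_id] using h
  have hYt : Yᵀ = Y := hY
  have hlo : ∀ i, lmin ≤ hX.1.eigenvalues i := fun i => hmin.2 ⟨i, rfl⟩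
  have hhi : ∀ i, hX.1.eigenvalues i ≤ lmax := fun i => hmax.2 ⟨i, rfl⟩
  have h0 : 0 < lmin := by
    obtain ⟨i, hi⟩ := hmin.1
    rw [← hi]; exact hX.eigenvalues_pos i
  have := aux_key (↑hX.1.eigenvectorUnitary : Matrix (Fin n) (Fin n) ℝ) Y hX.1.eigenvalues
    hU1 hYt lmin lmax hlo hhi h0
  rwa [← hXspec] at this
end

section
/- Let H be a norm on ℝⁿ of class C²(ℝⁿ∖{0}) satisfying λ|η|² ≤ (1/2)∇²(H²)(ξ)η·η ≤ Λ|η|² for all ξ ≠ 0, η ∈ ℝⁿ, with 0 < λ ≤ Λ. Then for every ξ ∈ 𝕊^{n-1} and every unit vector η orthogonal to ξ, one has (λ/√Λ)|η|² ≤ ∇²H(ξ)η·η ≤ (Λ/√λ)(1 + Λ/λ)|η|². -/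
open scoped RealInnerProductSpace

set_option maxHeartbeats 1000000 in
/-- For a uniformly elliptic `C²` norm `H`, on the unit sphere and for unit vectors `η ⟂ ξ`:
`(λ/√Λ)|η|² ≤ ∇²H(ξ)η·η ≤ (Λ/√λ)(1 + Λ/λ)|η|²`. -/
theorem stmt7 {n : ℕ} (H : EuclideanSpace ℝ (Fin n) → ℝ)
    (hpos : ∀ x, 0 ≤ H x)
    (hzero : ∀ x, H x = 0 ↔ x = 0)
    (htri : ∀ x y, H (x + y) ≤ H x + H y)
    (hhom : ∀ (c : ℝ) (x : EuclideanSpace ℝ (Fin n)), H (c • x) = |c| * H x)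
    (hC2 : ContDiffOn ℝ 2 H {(0 : EuclideanSpace ℝ (Fin n))}ᶜ)
    (lam Lam : ℝ) (hlam : 0 < lam) (hlL : lam ≤ Lam)
    (hell : ∀ ξ : EuclideanSpace ℝ (Fin n), ξ ≠ 0 → ∀ η : EuclideanSpace ℝ (Fin n),
      lam * ‖η‖ ^ 2 ≤ (1 / 2) * iteratedFDeriv ℝ 2 (fun x => (H x) ^ 2) ξ ![η, η] ∧
      (1 / 2) * iteratedFDeriv ℝ 2 (fun x => (H x) ^ 2) ξ ![η, η] ≤ Lam * ‖η‖ ^ 2) :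
    ∀ ξ : EuclideanSpace ℝ (Fin n), ‖ξ‖ = 1 →
      ∀ η : EuclideanSpace ℝ (Fin n), ‖η‖ = 1 → ⟪ξ, η⟫ = 0 →
        lam / Real.sqrt Lam * ‖η‖ ^ 2 ≤ iteratedFDeriv ℝ 2 H ξ ![η, η] ∧
        iteratedFDeriv ℝ 2 H ξ ![η, η] ≤ Lam / Real.sqrt lam * (1 + Lam / lam) * ‖η‖ ^ 2 := by
  classical
  let E := EuclideanSpace ℝ (Fin n)
  set F : E → (E →L[ℝ] ℝ) := fderiv ℝ H with hF
  set F2 : E → (E →L[ℝ] E →L[ℝ] ℝ) := fderiv ℝ F with hF2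
  have hUopen : IsOpen ({(0 : E)}ᶜ) := isOpen_compl_singleton
  have hnhds : ∀ x : E, x ≠ 0 → {(0:E)}ᶜ ∈ nhds x := fun x hx => hUopen.mem_nhds hx
  have hC2at : ∀ x : E, x ≠ 0 → ContDiffAt ℝ 2 H x :=
    fun x hx => hC2.contDiffAt (hnhds x hx)
  have hd1 : ∀ x : E, x ≠ 0 → HasFDerivAt H (F x) x := fun x hx =>
    ((hC2at x hx).differentiableAt (by norm_num)).hasFDerivAt
  have hdF : ∀ x : E, x ≠ 0 → HasFDerivAt F (F2 x) x := by
    intro x hx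
    have h1 : ContDiffAt ℝ 1 F x := (hC2at x hx).fderiv_right (by norm_num)
    exact (h1.differentiableAt (by norm_num)).hasFDerivAt
  -- Euler's identity
  have hEuler : ∀ x : E, x ≠ 0 → F x x = H x := by
    intro x hx
    have hsm : HasDerivAt (fun t : ℝ => t • x) x 1 := by
      simpa using (hasDerivAt_id (1:ℝ)).smul_const x
    have hx1 : HasFDerivAt H (F x) ((1:ℝ) • x) := by rw [one_smul]; exact hd1 x hx
    have h1 : HasDerivAt (fun t : ℝ => H (t • x)) (F x x) 1 := by
      have := hx1.comp_hasDerivAt 1 hsm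
      exact this
    have h2 : (fun t : ℝ => H (t • x)) =ᶠ[nhds 1] (fun t : ℝ => t * H x) := by
      filter_upwards [eventually_gt_nhds (by norm_num : (0:ℝ) < 1)] with t ht
      rw [hhom, abs_of_pos ht]
    have h3 : HasDerivAt (fun t : ℝ => H (t • x)) (H x) 1 :=
      (hasDerivAt_mul_const (H x)).congr_of_eventuallyEq h2
    exact h1.unique h3
  -- 0-homogeneity of the gradient
  have hF0 : ∀ c : ℝ, 0 < c → ∀ x : E, x ≠ 0 → F (c • x) = F x := by
    intro c hc x hx
    have hcx : c • x ≠ 0 := smul_ne_zero (ne_of_gt hc) hx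
    have hL : HasFDerivAt (fun y : E => c • y) (c • (ContinuousLinearMap.id ℝ E)) x := by
      exact ((ContinuousLinearMap.id ℝ E).hasFDerivAt (x := x)).const_smul c
    have h1 : HasFDerivAt (fun y : E => H (c • y)) ((F (c • x)).comp (c • (ContinuousLinearMap.id ℝ E))) x :=
      (hd1 _ hcx).comp x hL
    have h2 : (fun y : E => H (c • y)) = fun y : E => c * H y := by
      funext y; rw [hhom, abs_of_pos hc]
    have h3 : HasFDerivAt (fun y : E => c * H y) (c • F x) x := (hd1 x hx).const_mul c
    have h4 : (F (c • x)).comp (c • (ContinuousLinearMap.id ℝ E)) = c • F x := by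
      rw [← h2] at h3; exact h1.unique h3
    have h5 : c • F (c • x) = c • F x := by
      rw [← h4]; ext v
      simp [mul_comm]
    exact smul_right_injective _ (ne_of_gt hc) h5
  -- second derivative kills ξ
  have hF2x : ∀ x : E, x ≠ 0 → F2 x x = 0 := by
    intro x hx
    have hsm : HasDerivAt (fun t : ℝ => t • x) x 1 := by
      simpa using (hasDerivAt_id (1:ℝ)).smul_const x
    have hx1 : HasFDerivAt F (F2 x) ((1:ℝ) • x) := by rw [one_smul]; exact hdF x hx
    have h1 : HasDerivAt (fun t : ℝ => F (t • x)) (F2 x x) 1 := by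
      have := hx1.comp_hasDerivAt 1 hsm
      exact this
    have h2 : (fun t : ℝ => F (t • x)) =ᶠ[nhds 1] (fun _ : ℝ => F x) := by
      filter_upwards [eventually_gt_nhds (by norm_num : (0:ℝ) < 1)] with t ht
      exact hF0 t ht x hx
    have h3 : HasDerivAt (fun t : ℝ => F (t • x)) 0 1 :=
      (hasDerivAt_const (1:ℝ) (F x)).congr_of_eventuallyEq h2
    exact h1.unique h3
  -- key identity
  have key : ∀ x : E, x ≠ 0 → ∀ v : E,
      (1/2) * iteratedFDeriv ℝ 2 (fun y => (H y) ^ 2) x ![v, v]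
        = (F x v) ^ 2 + H x * (F2 x v v) := by
    intro x hx v
    have hG' : ∀ y : E, y ≠ 0 →
        HasFDerivAt (fun z => (H z) ^ 2) ((2 * H y) • F y) y := by
      intro y hy
      have := (hd1 y hy).mul (hd1 y hy)
      have h2 : H y • F y + H y • F y = (2 * H y) • F y := by
        rw [← add_smul]; ring_nf
      rw [h2] at this
      have e : (fun z => (H z) ^ 2) = H * H := by
        funext z; simp only [Pi.mul_apply]; ring
      rw [e]; exact this
    have hGev : fderiv ℝ (fun z => (H z) ^ 2) =ᶠ[nhds x] (fun y => (2 * H y) • F y) := by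
      filter_upwards [hnhds x hx] with y hy
      exact (hG' y hy).fderiv
    have hsnd : fderiv ℝ (fderiv ℝ (fun z => (H z) ^ 2)) x
        = fderiv ℝ (fun y => (2 * H y) • F y) x := hGev.fderiv_eq
    have hc : HasFDerivAt (fun y : E => 2 * H y) ((2:ℝ) • F x) x := (hd1 x hx).const_mul 2
    have hsm : HasFDerivAt (fun y => (2 * H y) • F y)
        ((2 * H x) • F2 x + ((2:ℝ) • F x).smulRight (F x)) x := hc.smul (hdF x hx)
    rw [iteratedFDeriv_two_apply, hsnd, hsm.fderiv]
    simp [ContinuousLinearMap.smul_apply, ContinuousLinearMap.smulRight_apply,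
      smul_eq_mul]
    ring
  -- bounds on H x ^ 2
  have hHsq : ∀ x : E, x ≠ 0 → lam * ‖x‖ ^ 2 ≤ H x ^ 2 ∧ H x ^ 2 ≤ Lam * ‖x‖ ^ 2 := by
    intro x hx
    have h1 := key x hx x
    rw [hEuler x hx, hF2x x hx, ContinuousLinearMap.zero_apply, mul_zero, add_zero] at h1
    have h2 := hell x hx x
    rw [h1] at h2
    exact h2
  -- main argument
  intro ξ hξ η hη hperp
  have hξ0 : ξ ≠ 0 := by intro h; rw [h, norm_zero] at hξ; norm_num at hξ
  have hη0 : η ≠ 0 := by intro h; rw [h, norm_zero] at hη; norm_num at hη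
  have hHξsq := hHsq ξ hξ0
  have hHηsq := hHsq η hη0
  rw [hξ] at hHξsq
  rw [hη] at hHηsq
  norm_num at hHξsq hHηsq
  have hHξpos : 0 < H ξ := by
    rcases lt_or_eq_of_le (hpos ξ) with h | h
    · exact h
    · exact absurd ((hzero ξ).mp h.symm) hξ0
  have hHξle : H ξ ≤ Real.sqrt Lam := by
    have := Real.sqrt_le_sqrt hHξsq.2
    rwa [Real.sqrt_sq (hpos ξ)] at this
  have hHξge : Real.sqrt lam ≤ H ξ := by
    have := Real.sqrt_le_sqrt hHξsq.1
    rwa [Real.sqrt_sq (hpos ξ)] at this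
  have hsl : (0:ℝ) < Real.sqrt lam := Real.sqrt_pos.mpr hlam
  have hsL : (0:ℝ) < Real.sqrt Lam := Real.sqrt_pos.mpr (lt_of_lt_of_le hlam hlL)
  -- Lipschitz bound on the gradient
  have hFb : |F ξ η| ≤ H η := by
    have hlin : HasDerivAt (fun t : ℝ => ξ + t • η) η 0 := by
      simpa using ((hasDerivAt_id (0:ℝ)).smul_const η).const_add ξ
    have hpt : HasFDerivAt H (F ξ) (ξ + (0:ℝ) • η) := by
      simpa using hd1 ξ hξ0
    have hg : HasDerivAt (fun t : ℝ => H (ξ + t • η)) (F ξ η) 0 := by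
      have := hpt.comp_hasDerivAt 0 hlin
      exact this
    have hbound : ∀ t : ℝ, |H (ξ + t • η) - H ξ| ≤ |t| * H η := by
      intro t
      have h1 : H (ξ + t • η) ≤ H ξ + |t| * H η := by
        have := htri ξ (t • η)
        rwa [hhom] at this
      have h2 : H ξ ≤ H (ξ + t • η) + |t| * H η := by
        have h3 := htri (ξ + t • η) (-(t • η))
        have h4 : ξ + t • η + -(t • η) = ξ := by abel
        rw [h4] at h3
        have h5 : H (-(t • η)) = |t| * H η := by
          rw [show -(t • η) = (-t) • η by simp, hhom, abs_neg]
        rw [h5] at h3; exact h3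
      rw [abs_sub_le_iff]; constructor <;> linarith
    have hs := hasDerivAt_iff_tendsto_slope.mp hg
    refine le_of_tendsto hs.abs ?_
    refine Filter.eventually_of_mem self_mem_nhdsWithin (fun t ht => ?_)
    have ht0 : (t:ℝ) ≠ 0 := ht
    rw [slope_def_field]
    have h0 : H (ξ + (0:ℝ) • η) = H ξ := by simp
    rw [h0, sub_zero, abs_div]
    rw [div_le_iff₀ (abs_pos.mpr ht0)]
    calc |H (ξ + t • η) - H ξ| ≤ |t| * H η := hbound t
      _ = H η * |t| := mul_comm _ _
  have hHηle : H η ≤ Real.sqrt Lam := by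
    have := Real.sqrt_le_sqrt hHηsq.2
    rwa [Real.sqrt_sq (hpos η)] at this
  -- symmetry of the second derivative
  have hsymm : ∀ v w : E, F2 ξ v w = F2 ξ w v := by
    intro v w
    refine second_derivative_symmetric_of_eventually (f := H) ?_ (hdF ξ hξ0) v w
    filter_upwards [hnhds ξ hξ0] with y hy using hd1 y hy
  -- decomposition
  set a : ℝ := F ξ η / H ξ with ha
  set ζ : E := η - a • ξ with hζ
  have hFζ : F ξ ζ = 0 := by
    have h1 : F ξ ζ = F ξ η - a * F ξ ξ := by
      rw [hζ, map_sub, map_smul]; rfl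
    rw [h1, hEuler ξ hξ0, ha]
    field_simp
    ring
  have hzξ : F2 ξ ξ = 0 := hF2x ξ hξ0
  have hdec : F2 ξ η η = F2 ξ ζ ζ := by
    have hη' : η = ζ + a • ξ := by rw [hζ]; abel
    have e1 : F2 ξ (ζ + a • ξ) = F2 ξ ζ := by
      rw [map_add, map_smul, hzξ, smul_zero, add_zero]
    have e2 : F2 ξ ζ ξ = 0 := by
      rw [hsymm ζ ξ, hzξ]; rfl
    conv_lhs => rw [hη']
    rw [e1, map_add, map_smul, e2, smul_zero, add_zero]
  have hζnorm : ‖ζ‖ ^ 2 = 1 + a ^ 2 := by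
    rw [hζ, norm_sub_sq_real, real_inner_smul_right, real_inner_comm, hperp,
      norm_smul, Real.norm_eq_abs, mul_pow, sq_abs, hη, hξ]
    ring
  have ha2 : a ^ 2 ≤ Lam / lam := by
    have h1 : (F ξ η) ^ 2 ≤ Lam := by
      have := sq_le_sq' (neg_abs_le (F ξ η)) (le_abs_self (F ξ η))
      calc (F ξ η) ^ 2 ≤ |F ξ η| ^ 2 := by rw [sq_abs]
        _ ≤ (H η) ^ 2 := by
            apply pow_le_pow_left₀ (abs_nonneg _) hFb
        _ ≤ Lam := hHηsq.2
    rw [ha, div_pow]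
    apply div_le_div₀ (le_of_lt (lt_of_lt_of_le hlam hlL)) h1 (by positivity)
    exact hHξsq.1
  -- the key inequality at ζ
  have hkζ : (1/2) * iteratedFDeriv ℝ 2 (fun y => (H y) ^ 2) ξ ![ζ, ζ]
      = H ξ * (F2 ξ ζ ζ) := by
    rw [key ξ hξ0 ζ, hFζ]; ring
  have hellζ := hell ξ hξ0 ζ
  rw [hkζ] at hellζ
  set T : ℝ := F2 ξ ζ ζ with hT
  have hz1 : (1:ℝ) ≤ ‖ζ‖ ^ 2 := by rw [hζnorm]; nlinarith [sq_nonneg a]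
  have hTpos : 0 < T := by
    have h1 : 0 < lam * ‖ζ‖ ^ 2 :=
      lt_of_lt_of_le hlam (le_mul_of_one_le_right (le_of_lt hlam) hz1)
    have h2 : 0 < H ξ * T := lt_of_lt_of_le h1 hellζ.1
    rcases mul_pos_iff.mp h2 with ⟨_, hTp⟩ | ⟨hn, _⟩
    · exact hTp
    · linarith
  -- final computation
  have hit : iteratedFDeriv ℝ 2 H ξ ![η, η] = T := by
    rw [iteratedFDeriv_two_apply]
    simp only [Matrix.cons_val_zero, Matrix.cons_val_one, Matrix.head_cons]
    show F2 ξ η η = T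
    rw [hdec]
  rw [hit, hη]
  norm_num
  constructor
  · -- lower bound
    rw [div_le_iff₀ hsL]
    calc lam ≤ lam * ‖ζ‖ ^ 2 := le_mul_of_one_le_right (le_of_lt hlam) hz1
      _ ≤ H ξ * T := hellζ.1
      _ ≤ Real.sqrt Lam * T := mul_le_mul_of_nonneg_right hHξle (le_of_lt hTpos)
      _ = T * Real.sqrt Lam := mul_comm _ _
  · -- upper bound
    have h1 : H ξ * T ≤ Lam * (1 + Lam / lam) := by
      calc H ξ * T ≤ Lam * ‖ζ‖ ^ 2 := hellζ.2
        _ = Lam * (1 + a ^ 2) := by rw [hζnorm]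
        _ ≤ Lam * (1 + Lam / lam) :=
            mul_le_mul_of_nonneg_left (by linarith [ha2])
              (le_of_lt (lt_of_lt_of_le hlam hlL))
    have h2 : Real.sqrt lam * T ≤ H ξ * T := mul_le_mul_of_nonneg_right hHξge (le_of_lt hTpos)
    rw [div_mul_eq_mul_div, le_div_iff₀ hsl]
    calc T * Real.sqrt lam = Real.sqrt lam * T := mul_comm _ _
      _ ≤ H ξ * T := h2
      _ ≤ Lam * (1 + Lam / lam) := h1
end

section
/- Let H be a C²(ℝⁿ∖{0}) norm with λ|η|² ≤ (1/2)∇²(H²)(ξ)η·η ≤ Λ|η|² for ξ≠0, and a : (0,∞)→(0,∞) a C¹ function with −1 < i_a ≤ s_a < ∞ (where i_a = inf ta'/a, s_a = sup ta'/a). Define 𝒜(ξ) = a(H(ξ))·(1/2)∇(H²)(ξ) for ξ ≠ 0. Then for all ξ ≠ 0 and η ∈ ℝⁿ: λ·min{1, 1+i_a}·a(H(ξ))·|η|² ≤ (∇𝒜(ξ)η)·η ≤ Λ·max{1, 1+s_a}·a(H(ξ))·|η|². -/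
open scoped RealInnerProductSpace
open Filter Set

set_option maxHeartbeats 1000000

lemma aux_lower (lam ia r α N Q P : ℝ) (hα : 0 < α) (hQl : lam * N ≤ Q)
    (hP : 0 ≤ P) (hPQ : P ≤ Q) (hia : -1 < ia) (hrge : ia ≤ r) :
    lam * min 1 (1 + ia) * α * N ≤ α * Q + r * α * P := by
  rcases le_total ia 0 with h | h
  · rw [min_eq_right (by linarith)]
    nlinarith [mul_nonneg (mul_nonneg (sub_nonneg.2 hrge) hα.le) hP,
      mul_nonneg (neg_nonneg.2 h) (sub_nonneg.2 (mul_le_mul_of_nonneg_left hPQ hα.le)),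
      mul_nonneg (by linarith : (0:ℝ) ≤ 1 + ia)
        (sub_nonneg.2 (mul_le_mul_of_nonneg_left hQl hα.le))]
  · rw [min_eq_left (by linarith)]
    nlinarith [mul_le_mul_of_nonneg_left hQl hα.le,
      mul_nonneg (mul_nonneg (le_trans h hrge) hα.le) hP]

lemma aux_upper (Lam sa r α N Q P : ℝ) (hα : 0 < α) (hQu : Q ≤ Lam * N)
    (hP : 0 ≤ P) (hPQ : P ≤ Q) (hQnn : 0 ≤ Q) (hrle : r ≤ sa) :
    α * Q + r * α * P ≤ Lam * max 1 (1 + sa) * α * N := by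
  rcases le_total sa 0 with h | h
  · rw [max_eq_left (by linarith)]
    nlinarith [mul_le_mul_of_nonneg_left hQu hα.le,
      mul_nonpos_of_nonpos_of_nonneg (mul_nonpos_of_nonpos_of_nonneg
        (le_trans hrle h) hα.le) hP]
  · rw [max_eq_right (by linarith)]
    nlinarith [mul_nonneg (mul_nonneg (sub_nonneg.2 hrle) hα.le) hP,
      mul_nonneg h (sub_nonneg.2 (mul_le_mul_of_nonneg_left hPQ hα.le)),
      mul_nonneg (by linarith : (0:ℝ) ≤ 1 + sa)
        (sub_nonneg.2 (mul_le_mul_of_nonneg_left hQu hα.le))]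


lemma aux_deriv_nonneg {ψ : ℝ → ℝ} {s : Set ℝ} (hs : s ∈ nhds (0:ℝ))
    (hm : MonotoneOn ψ s) (hd : DifferentiableAt ℝ ψ 0) : 0 ≤ deriv ψ 0 := by
  have h := hd.hasDerivAt
  rw [hasDerivAt_iff_tendsto_slope] at h
  have h' : Tendsto (slope ψ 0) (nhdsWithin 0 (Set.Ioi 0)) (nhds (deriv ψ 0)) :=
    h.mono_left (nhdsWithin_mono _ (fun t ht => ne_of_gt ht))
  refine ge_of_tendsto h' ?_
  have h0s : (0:ℝ) ∈ s := mem_of_mem_nhds hs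
  filter_upwards [self_mem_nhdsWithin, mem_nhdsWithin_of_mem_nhds hs] with t ht hts
  rw [slope_def_field]
  have : ψ 0 ≤ ψ t := hm h0s hts (le_of_lt ht)
  have ht' : (0:ℝ) < t := ht
  exact div_nonneg (sub_nonneg.2 this) (by simpa using le_of_lt ht')

lemma aux_convexOn {n : ℕ} (H : EuclideanSpace ℝ (Fin n) → ℝ)
    (htri : ∀ x y, H (x + y) ≤ H x + H y)
    (hhom : ∀ (c : ℝ) (x : EuclideanSpace ℝ (Fin n)), H (c • x) = |c| * H x) :
    ConvexOn ℝ Set.univ H := by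
  refine ⟨convex_univ, fun x _ y _ a b ha hb hab => ?_⟩
  calc H (a • x + b • y) ≤ H (a • x) + H (b • y) := htri _ _
    _ = a * H x + b * H y := by rw [hhom, hhom, abs_of_nonneg ha, abs_of_nonneg hb]

lemma aux_secondDeriv_nonneg {n : ℕ} (H : EuclideanSpace ℝ (Fin n) → ℝ)
    (hconv : ConvexOn ℝ Set.univ H)
    (hC2 : ContDiffOn ℝ 2 H {(0 : EuclideanSpace ℝ (Fin n))}ᶜ)
    (ξ : EuclideanSpace ℝ (Fin n)) (hξ : ξ ≠ 0) (η : EuclideanSpace ℝ (Fin n)) :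
    0 ≤ fderiv ℝ (fderiv ℝ H) ξ η η := by
  rcases eq_or_ne η 0 with rfl | hη
  · simp
  have hξ0 : 0 < ‖ξ‖ := norm_pos_iff.2 hξ
  have hη0 : 0 < ‖η‖ := norm_pos_iff.2 hη
  set ε : ℝ := ‖ξ‖ / ‖η‖ with hε
  have hε0 : 0 < ε := div_pos hξ0 hη0
  set I : Set ℝ := Set.Ioo (-ε) ε with hI
  set L : ℝ → EuclideanSpace ℝ (Fin n) := fun t => ξ + t • η with hL
  have hLne : ∀ t ∈ I, L t ≠ 0 := by
    intro t ht h0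
    have h1 : ξ = -(t • η) := eq_neg_of_add_eq_zero_left h0
    have h2 : ‖ξ‖ = |t| * ‖η‖ := by rw [h1, norm_neg, norm_smul, Real.norm_eq_abs]
    have habs : |t| < ε := abs_lt.2 ⟨ht.1, ht.2⟩
    have : |t| * ‖η‖ < ε * ‖η‖ := by gcongr
    rw [div_mul_cancel₀ _ (ne_of_gt hη0)] at this
    linarith [h2 ▸ this]
  have hdiffat : ∀ t ∈ I, ContDiffAt ℝ 2 H (L t) := fun t ht =>
    hC2.contDiffAt (isOpen_compl_singleton.mem_nhds (hLne t ht))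
  set F := fderiv ℝ H with hF
  have hLd : ∀ t : ℝ, HasDerivAt L η t := by
    intro t
    simpa [hL] using ((hasDerivAt_id t).smul_const η).const_add ξ
  set φ : ℝ → ℝ := fun s => H (L s) with hφdef
  have hφ : ∀ t ∈ I, HasDerivAt φ (F (L t) η) t := by
    intro t ht
    have hHd : DifferentiableAt ℝ H (L t) :=
      (hdiffat t ht).differentiableAt (by norm_num)
    exact hHd.hasFDerivAt.comp_hasDerivAt t (hLd t)
  have hφconv : ConvexOn ℝ I φ := by
    have h1 := hconv.comp_affineMap (AffineMap.lineMap (ξ : EuclideanSpace ℝ (Fin n)) (ξ + η))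
    have h2 : (H ∘ (AffineMap.lineMap (ξ : EuclideanSpace ℝ (Fin n)) (ξ + η))) = φ := by
      funext t
      simp [AffineMap.lineMap_apply, hφdef, hL, add_sub_cancel_left, add_comm]
    rw [h2] at h1
    exact (h1.subset (Set.subset_univ _) (convex_Ioo _ _)).congr (fun _ _ => rfl)
  have hmono : MonotoneOn (deriv φ) I :=
    hφconv.monotoneOn_deriv (fun t ht => (hφ t ht).differentiableAt)
  set χ : ℝ → ℝ := fun t => F (L t) η with hχdef
  have hψeq : ∀ t ∈ I, deriv φ t = χ t := fun t ht => (hφ t ht).deriv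
  have hmonoχ : MonotoneOn χ I := by
    intro x hx y hy hxy
    rw [← hψeq x hx, ← hψeq y hy]
    exact hmono hx hy hxy
  have hFd : DifferentiableAt ℝ F ξ := by
    have hc : ContDiffAt ℝ 2 H ξ := hC2.contDiffAt (isOpen_compl_singleton.mem_nhds hξ)
    exact (hc.fderiv_right (m := 1) (by norm_num)).differentiableAt one_ne_zero
  have hL0 : L 0 = ξ := by simp [hL]
  have hχ : HasDerivAt χ (fderiv ℝ F ξ η η) 0 := by
    have h1 : HasDerivAt (fun t => F (L t)) (fderiv ℝ F ξ η) 0 := by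
      have hf' : HasFDerivAt F (fderiv ℝ F ξ) (L 0) := hL0 ▸ hFd.hasFDerivAt
      exact hf'.comp_hasDerivAt 0 (hLd 0)
    have h2 := h1.clm_apply (hasDerivAt_const (0:ℝ) η)
    simpa using h2
  have h0I : (0:ℝ) ∈ I := ⟨by linarith, hε0⟩
  have hnn : 0 ≤ deriv χ 0 :=
    aux_deriv_nonneg (isOpen_Ioo.mem_nhds h0I) hmonoχ hχ.differentiableAt
  rwa [hχ.deriv] at hnn

/-- Ellipticity bounds for the Jacobian of `𝒜(ξ) = a(H(ξ))·½∇(H²)(ξ)`: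
`λ·min{1,1+i_a}·a(H(ξ))|η|² ≤ ∇𝒜(ξ)η·η ≤ Λ·max{1,1+s_a}·a(H(ξ))|η|²` for `ξ ≠ 0`. -/
theorem stmt15 {n : ℕ} (H : EuclideanSpace ℝ (Fin n) → ℝ)
    (hpos : ∀ x, 0 ≤ H x)
    (hzero : ∀ x, H x = 0 ↔ x = 0)
    (htri : ∀ x y, H (x + y) ≤ H x + H y)
    (hhom : ∀ (c : ℝ) (x : EuclideanSpace ℝ (Fin n)), H (c • x) = |c| * H x)
    (hC2 : ContDiffOn ℝ 2 H {(0 : EuclideanSpace ℝ (Fin n))}ᶜ)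
    (lam Lam : ℝ) (hlam : 0 < lam) (hlL : lam ≤ Lam)
    (hell : ∀ ξ : EuclideanSpace ℝ (Fin n), ξ ≠ 0 → ∀ η : EuclideanSpace ℝ (Fin n),
      lam * ‖η‖ ^ 2 ≤ (1 / 2) * iteratedFDeriv ℝ 2 (fun x => (H x) ^ 2) ξ ![η, η] ∧
      (1 / 2) * iteratedFDeriv ℝ 2 (fun x => (H x) ^ 2) ξ ![η, η] ≤ Lam * ‖η‖ ^ 2)
    (a : ℝ → ℝ) (ia sa : ℝ)
    (ha : ∀ t > (0 : ℝ), 0 < a t)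
    (hadiff : ∀ t > (0 : ℝ), DifferentiableAt ℝ a t)
    (hia : -1 < ia) (hiasa : ia ≤ sa)
    (hlow : ∀ t > (0 : ℝ), ia ≤ t * deriv a t / a t)
    (hhigh : ∀ t > (0 : ℝ), t * deriv a t / a t ≤ sa)
    (𝒜 : EuclideanSpace ℝ (Fin n) → EuclideanSpace ℝ (Fin n))
    (h𝒜 : ∀ ξ : EuclideanSpace ℝ (Fin n), ξ ≠ 0 →
      𝒜 ξ = a (H ξ) • ((1 / 2 : ℝ) • gradient (fun x => (H x) ^ 2) ξ)) :
    ∀ ξ : EuclideanSpace ℝ (Fin n), ξ ≠ 0 → ∀ η : EuclideanSpace ℝ (Fin n),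
      lam * min 1 (1 + ia) * a (H ξ) * ‖η‖ ^ 2 ≤ ⟪fderiv ℝ 𝒜 ξ η, η⟫ ∧
      ⟪fderiv ℝ 𝒜 ξ η, η⟫ ≤ Lam * max 1 (1 + sa) * a (H ξ) * ‖η‖ ^ 2 := by
  intro ξ hξ η
  have ht₀ : 0 < H ξ :=
    lt_of_le_of_ne (hpos ξ) (fun h => hξ ((hzero ξ).1 h.symm))
  have hα : 0 < a (H ξ) := ha (H ξ) ht₀
  have hmem : ({(0 : EuclideanSpace ℝ (Fin n))}ᶜ : Set _) ∈ nhds ξ :=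
    isOpen_compl_singleton.mem_nhds hξ
  have hcH : ContDiffAt ℝ 2 H ξ := hC2.contDiffAt hmem
  have hHd : DifferentiableAt ℝ H ξ := hcH.differentiableAt (by norm_num)
  set F := fderiv ℝ H with hF
  have hFd : DifferentiableAt ℝ F ξ :=
    (hcH.fderiv_right (m := 1) (by norm_num)).differentiableAt one_ne_zero
  set f : EuclideanSpace ℝ (Fin n) → ℝ := fun x => H x ^ 2 with hfdef
  set p := F ξ η with hp
  set S := fderiv ℝ F ξ η η with hS
  have hev : fderiv ℝ f =ᶠ[nhds ξ] fun x => (2 * H x) • F x := by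
    filter_upwards [hmem] with x hx
    have hdx : DifferentiableAt ℝ H x :=
      (hC2.contDiffAt (isOpen_compl_singleton.mem_nhds hx)).differentiableAt (by norm_num)
    have h1 : f = fun y => H y * H y := by funext y; rw [hfdef]; ring
    rw [h1, fderiv_fun_mul hdx hdx, two_mul, add_smul]
  have hfd2 : ContDiffAt ℝ 2 f ξ := hcH.pow 2
  have hFf : DifferentiableAt ℝ (fderiv ℝ f) ξ :=
    (hfd2.fderiv_right (m := 1) (by norm_num)).differentiableAt one_ne_zero
  have hdc : DifferentiableAt ℝ (fun x => 2 * H x) ξ := hHd.const_mul 2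
  have hG2 : fderiv ℝ (fderiv ℝ f) ξ
      = (2 * H ξ) • fderiv ℝ F ξ + (fderiv ℝ (fun x => 2 * H x) ξ).smulRight (F ξ) := by
    rw [hev.fderiv_eq, fderiv_fun_smul hdc hFd]
  have hdc2 : fderiv ℝ (fun x => 2 * H x) ξ = (2:ℝ) • F ξ := by
    rw [fderiv_const_mul hHd]
  have hQ : (1/2 : ℝ) * iteratedFDeriv ℝ 2 f ξ ![η, η] = p ^ 2 + H ξ * S := by
    rw [iteratedFDeriv_two_apply]
    simp only [Matrix.cons_val_zero, Matrix.cons_val_one, Matrix.head_cons]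
    rw [hG2, hdc2]
    simp only [ContinuousLinearMap.add_apply, ContinuousLinearMap.smul_apply,
      ContinuousLinearMap.smulRight_apply, ContinuousLinearMap.coe_smul', Pi.smul_apply]
    simp only [smul_eq_mul, ← hp, ← hS]
    ring
  -- gradient part
  set e := (InnerProductSpace.toDual ℝ (EuclideanSpace ℝ (Fin n))).symm with hedef
  have hgradf : gradient f = ⇑e ∘ (fderiv ℝ f) := rfl
  have hGd : DifferentiableAt ℝ (gradient f) ξ := by
    rw [hgradf]
    exact (e.comp_hasFDerivAt_iff.2 hFf.hasFDerivAt).differentiableAt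
  have hfderivgrad : ∀ v : EuclideanSpace ℝ (Fin n),
      fderiv ℝ (gradient f) ξ v = e (fderiv ℝ (fderiv ℝ f) ξ v) := by
    intro v
    rw [hgradf, e.comp_fderiv]
    rfl
  have hinner_e : ∀ (L : StrongDual ℝ (EuclideanSpace ℝ (Fin n)))
      (v : EuclideanSpace ℝ (Fin n)), ⟪e L, v⟫ = L v := by
    intro L v
    exact InnerProductSpace.toDual_symm_apply
  have hsecond : ⟪fderiv ℝ (gradient f) ξ η, η⟫ = 2 * H ξ * S + 2 * p ^ 2 := by
    rw [hfderivgrad, hinner_e, hG2, hdc2]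
    simp only [ContinuousLinearMap.add_apply, ContinuousLinearMap.smul_apply,
      ContinuousLinearMap.smulRight_apply, smul_eq_mul, ← hp, ← hS]
    ring
  have hgradval : ⟪gradient f ξ, η⟫ = 2 * H ξ * p := by
    rw [hgradf]
    show ⟪e (fderiv ℝ f ξ), η⟫ = 2 * H ξ * p
    rw [hinner_e, hev.self_of_nhds]
    simp [smul_eq_mul, ← hp]
  -- derivative of 𝒜
  have h𝒜ev : 𝒜 =ᶠ[nhds ξ] fun x => a (H x) • ((1/2:ℝ) • gradient f x) := by
    filter_upwards [hmem] with x hx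
    exact h𝒜 x hx
  have hcd : DifferentiableAt ℝ (fun x => a (H x)) ξ := by
    have := (hadiff (H ξ) ht₀).comp ξ hHd
    exact this
  have hgd : DifferentiableAt ℝ (fun x => (1/2:ℝ) • gradient f x) ξ := hGd.const_smul (1/2:ℝ)
  have hfA : fderiv ℝ 𝒜 ξ = a (H ξ) • fderiv ℝ (fun x => (1/2:ℝ) • gradient f x) ξ
      + (fderiv ℝ (fun x => a (H x)) ξ).smulRight ((1/2:ℝ) • gradient f ξ) := by
    rw [h𝒜ev.fderiv_eq, fderiv_fun_smul hcd hgd]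
  have hhalf : fderiv ℝ (fun x => (1/2:ℝ) • gradient f x) ξ η
      = (1/2:ℝ) • fderiv ℝ (gradient f) ξ η := by
    rw [fderiv_fun_const_smul hGd]
    rfl
  have hca : fderiv ℝ (fun x => a (H x)) ξ η = deriv a (H ξ) * p := by
    have hcomp : fderiv ℝ (a ∘ H) ξ = (fderiv ℝ a (H ξ)).comp (fderiv ℝ H ξ) :=
      fderiv_comp ξ (hadiff _ ht₀) hHd
    have h1 : fderiv ℝ (fun x => a (H x)) ξ η = (fderiv ℝ a (H ξ)) p := by
      rw [show (fun x => a (H x)) = a ∘ H from rfl, hcomp]; rfl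
    have h2 := (fderiv ℝ a (H ξ)).map_smul p (1:ℝ)
    simp only [smul_eq_mul, mul_one] at h2
    rw [h1, h2, fderiv_apply_one_eq_deriv, mul_comm]
  have hA : ⟪fderiv ℝ 𝒜 ξ η, η⟫ = a (H ξ) * (p ^ 2 + H ξ * S)
      + H ξ * deriv a (H ξ) * p ^ 2 := by
    rw [hfA]
    simp only [ContinuousLinearMap.add_apply, ContinuousLinearMap.smul_apply,
      ContinuousLinearMap.smulRight_apply]
    rw [inner_add_left, real_inner_smul_left, real_inner_smul_left, hhalf,
      real_inner_smul_left, hsecond, hca, real_inner_smul_left, hgradval]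
    ring
  -- final estimates
  obtain ⟨hQl, hQu⟩ := hell ξ hξ η
  rw [hQ] at hQl hQu
  have hSnn : 0 ≤ S := by
    rw [hS, hF]
    exact aux_secondDeriv_nonneg H (aux_convexOn H htri hhom) hC2 ξ hξ η
  have hp2Q : p ^ 2 ≤ p ^ 2 + H ξ * S := by nlinarith [mul_nonneg ht₀.le hSnn]
  set r := H ξ * deriv a (H ξ) / a (H ξ) with hr
  have hrla : H ξ * deriv a (H ξ) = r * a (H ξ) := (div_mul_cancel₀ _ (ne_of_gt hα)).symm
  have hrge : ia ≤ r := hlow (H ξ) ht₀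
  have hrle : r ≤ sa := hhigh (H ξ) ht₀
  rw [hA, hrla]
  set Q := p ^ 2 + H ξ * S with hQdef
  have hQnn : 0 ≤ Q := le_trans (sq_nonneg p) hp2Q
  refine ⟨?_, ?_⟩
  · have := aux_lower lam ia r (a (H ξ)) (‖η‖ ^ 2) Q (p ^ 2) hα hQl (sq_nonneg p) hp2Q hia hrge
    linarith
  · have := aux_upper Lam sa r (a (H ξ)) (‖η‖ ^ 2) Q (p ^ 2) hα hQu (sq_nonneg p) hp2Q hQnn hrle
    linarith
end

section
/- Under the assumptions of the previous context, the map 𝒜(ξ) = a(H(ξ))·(1/2)∇(H²)(ξ) (extended by 𝒜(0)=0) is strictly monotone: (𝒜(ξ) − 𝒜(η))·(ξ − η) > 0 for all ξ, η ∈ ℝⁿ with ξ ≠ η. -/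
open scoped RealInnerProductSpace

set_option maxHeartbeats 1600000 in
/-- Strict monotonicity of `𝒜(ξ) = a(H(ξ))·½∇(H²)(ξ)` (extended by `𝒜(0)=0`):
`(𝒜(ξ) − 𝒜(η))·(ξ − η) > 0` whenever `ξ ≠ η`. -/
theorem stmt16 {n : ℕ} (H : EuclideanSpace ℝ (Fin n) → ℝ)
    (hpos : ∀ x, 0 ≤ H x)
    (hzero : ∀ x, H x = 0 ↔ x = 0)
    (htri : ∀ x y, H (x + y) ≤ H x + H y)
    (hhom : ∀ (c : ℝ) (x : EuclideanSpace ℝ (Fin n)), H (c • x) = |c| * H x)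
    (hC2 : ContDiffOn ℝ 2 H {(0 : EuclideanSpace ℝ (Fin n))}ᶜ)
    (lam Lam : ℝ) (hlam : 0 < lam) (hlL : lam ≤ Lam)
    (hell : ∀ ξ : EuclideanSpace ℝ (Fin n), ξ ≠ 0 → ∀ η : EuclideanSpace ℝ (Fin n),
      lam * ‖η‖ ^ 2 ≤ (1 / 2) * iteratedFDeriv ℝ 2 (fun x => (H x) ^ 2) ξ ![η, η] ∧
      (1 / 2) * iteratedFDeriv ℝ 2 (fun x => (H x) ^ 2) ξ ![η, η] ≤ Lam * ‖η‖ ^ 2)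
    (a : ℝ → ℝ) (ia sa : ℝ)
    (ha : ∀ t > (0 : ℝ), 0 < a t)
    (hadiff : ∀ t > (0 : ℝ), DifferentiableAt ℝ a t)
    (hia : -1 < ia) (hiasa : ia ≤ sa)
    (hlow : ∀ t > (0 : ℝ), ia ≤ t * deriv a t / a t)
    (hhigh : ∀ t > (0 : ℝ), t * deriv a t / a t ≤ sa)
    (𝒜 : EuclideanSpace ℝ (Fin n) → EuclideanSpace ℝ (Fin n))
    (h𝒜0 : 𝒜 0 = 0)
    (h𝒜 : ∀ ξ : EuclideanSpace ℝ (Fin n), ξ ≠ 0 →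
      𝒜 ξ = a (H ξ) • ((1 / 2 : ℝ) • gradient (fun x => (H x) ^ 2) ξ)) :
    ∀ ξ η : EuclideanSpace ℝ (Fin n), ξ ≠ η → 0 < ⟪𝒜 ξ - 𝒜 η, ξ - η⟫ := by
  intro ξ η hne
  set F : EuclideanSpace ℝ (Fin n) → ℝ := fun x => (H x) ^ 2 with hFdef
  -- basic positivity of H off 0
  have hHpos : ∀ x : EuclideanSpace ℝ (Fin n), x ≠ 0 → 0 < H x := fun x hx =>
    (hpos x).lt_of_ne (fun h => hx ((hzero x).1 h.symm))
  -- regularity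
  have hHC2 : ∀ x : EuclideanSpace ℝ (Fin n), x ≠ 0 → ContDiffAt ℝ 2 H x := fun x hx =>
    hC2.contDiffAt (isOpen_compl_singleton.mem_nhds hx)
  have hFC2 : ∀ x : EuclideanSpace ℝ (Fin n), x ≠ 0 → ContDiffAt ℝ 2 F x := fun x hx => (hHC2 x hx).pow 2
  have hHd : ∀ x : EuclideanSpace ℝ (Fin n), x ≠ 0 → DifferentiableAt ℝ H x := fun x hx =>
    (hHC2 x hx).differentiableAt two_ne_zero
  have hFd : ∀ x : EuclideanSpace ℝ (Fin n), x ≠ 0 → DifferentiableAt ℝ F x := fun x hx =>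
    (hFC2 x hx).differentiableAt two_ne_zero
  have hFd2 : ∀ x : EuclideanSpace ℝ (Fin n), x ≠ 0 → DifferentiableAt ℝ (fderiv ℝ F) x := fun x hx =>
    ((hFC2 x hx).fderiv_right (m := 1) (by norm_num)).differentiableAt one_ne_zero
  have hHd2 : ∀ x : EuclideanSpace ℝ (Fin n), x ≠ 0 → DifferentiableAt ℝ (fderiv ℝ H) x := fun x hx =>
    ((hHC2 x hx).fderiv_right (m := 1) (by norm_num)).differentiableAt one_ne_zero
  -- fderiv of F in terms of H
  have hFderiv : ∀ x : EuclideanSpace ℝ (Fin n), x ≠ 0 → ∀ w, fderiv ℝ F x w = 2 * H x * fderiv ℝ H x w := by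
    intro x hx w
    have h1 : HasFDerivAt F (H x • fderiv ℝ H x + H x • fderiv ℝ H x) x := by
      have := (hHd x hx).hasFDerivAt.mul (hHd x hx).hasFDerivAt
      rw [hFdef]; simp only [pow_two]; exact this
    rw [h1.fderiv]
    simp
    ring
  -- Euler identity
  have hEuler : ∀ x : EuclideanSpace ℝ (Fin n), x ≠ 0 → fderiv ℝ F x x = 2 * F x := by
    intro x hx
    have hψ : (fun t : ℝ => F (t • x)) = fun t : ℝ => t ^ 2 * F x := by
      funext t
      simp only [hFdef, hhom t x, mul_pow, sq_abs]
    have hsm : HasDerivAt (fun t : ℝ => t • x) x 1 := by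
      simpa using ((hasDerivAt_id (1 : ℝ)).smul_const x)
    have hd' : HasFDerivAt F (fderiv ℝ F x) ((1 : ℝ) • x) := by
      rw [one_smul]; exact (hFd x hx).hasFDerivAt
    have h1 : HasDerivAt (fun t : ℝ => F (t • x)) (fderiv ℝ F x x) 1 := by
      exact hd'.comp_hasDerivAt 1 hsm
    have h2 : HasDerivAt (fun t : ℝ => t ^ 2 * F x) (2 * F x) 1 := by
      simpa using (hasDerivAt_pow 2 (1 : ℝ)).mul_const (F x)
    rw [hψ] at h1
    exact h1.unique h2
  -- gradient pairing
  have hgradpair : ∀ x : EuclideanSpace ℝ (Fin n), ∀ w : EuclideanSpace ℝ (Fin n), ⟪gradient F x, w⟫ = fderiv ℝ F x w := by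
    intro x w
    rw [gradient]
    exact InnerProductSpace.toDual_symm_apply
  -- inner product of 𝒜 x with x
  have hAx : ∀ x : EuclideanSpace ℝ (Fin n), x ≠ 0 → ⟪𝒜 x, x⟫ = a (H x) * F x := by
    intro x hx
    rw [h𝒜 x hx, real_inner_smul_left, real_inner_smul_left, hgradpair x x, hEuler x hx]
    ring
  have hAxpos : ∀ x : EuclideanSpace ℝ (Fin n), x ≠ 0 → 0 < ⟪𝒜 x, x⟫ := by
    intro x hx
    rw [hAx x hx]
    exact mul_pos (ha _ (hHpos x hx)) (by simpa [hFdef] using pow_pos (hHpos x hx) 2)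
  -- trivial endpoint cases
  by_cases hη0 : η = 0
  · subst hη0
    simpa [h𝒜0] using hAxpos ξ hne
  by_cases hξ0 : ξ = 0
  · subst hξ0
    have := hAxpos η hη0
    simpa [h𝒜0, inner_neg_neg] using this
  -- the segment
  set v : EuclideanSpace ℝ (Fin n) := ξ - η with hvdef
  have hv : v ≠ 0 := sub_ne_zero.2 hne
  set γ : ℝ → EuclideanSpace ℝ (Fin n) := fun t => η + t • v with hγdef
  have hγ0 : γ 0 = η := by simp [hγdef]
  have hγ1 : γ 1 = ξ := by simp [hγdef, hvdef]
  by_cases hseg : ∃ t ∈ Set.Ioo (0 : ℝ) 1, γ t = 0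
  · -- 0 in the interior of the segment: ξ, η are opposite multiples
    obtain ⟨t₀, ht₀, h0⟩ := hseg
    have h1t : (0 : ℝ) < 1 - t₀ := by linarith [ht₀.2]
    have hc : 0 < t₀ / (1 - t₀) := div_pos ht₀.1 h1t
    set c : ℝ := t₀ / (1 - t₀) with hcdef
    have hη' : η = (-c) • ξ := by
      have h2 : (1 - t₀) • η = -(t₀ • ξ) := by
        have h3 : (1 - t₀) • η + t₀ • ξ = 0 := by
          rw [← h0]; simp only [hγdef, hvdef]; module
        linear_combination (norm := module) h3
      have h4 := congrArg (fun z : EuclideanSpace ℝ (Fin n) => (1 - t₀)⁻¹ • z) h2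
      simp only [inv_smul_smul₀ h1t.ne'] at h4
      rw [h4, smul_neg, smul_smul, ← neg_smul]
      congr 1
      rw [hcdef]
      field_simp
    have h1c : (0:ℝ) < 1 + c := by linarith
    have hxv : ξ - η = (1 + c) • ξ := by rw [hη']; module
    have hxv2 : (-((1 + c) / c)) • η = ξ - η := by
      rw [hxv, hη', smul_smul]
      congr 1
      field_simp
    have key : ⟪𝒜 ξ - 𝒜 η, ξ - η⟫ =
        (1 + c) * ⟪𝒜 ξ, ξ⟫ + ((1 + c) / c) * ⟪𝒜 η, η⟫ := by
      rw [inner_sub_left]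
      nth_rewrite 1 [hxv]
      rw [← hxv2]
      rw [real_inner_smul_right, real_inner_smul_right]
      ring
    show 0 < ⟪𝒜 ξ - 𝒜 η, ξ - η⟫
    rw [key]
    have hp1 := hAxpos ξ hξ0
    have hp2 := hAxpos η hη0
    exact add_pos (mul_pos h1c hp1) (mul_pos (div_pos h1c hc) hp2)
  · -- main case : the segment avoids 0
    push_neg at hseg
    have hS : ∀ t ∈ Set.Icc (0 : ℝ) 1, γ t ≠ 0 := by
      intro t ht h0
      rcases eq_or_lt_of_le ht.1 with h | h
      · rw [← h, hγ0] at h0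
        exact hη0 h0
      rcases eq_or_lt_of_le ht.2 with h' | h'
      · rw [h', hγ1] at h0
        exact hξ0 h0
      exact hseg t ⟨h, h'⟩ h0
    -- notation
    set S : Set ℝ := {t : ℝ | γ t ≠ 0} with hSdef
    have hγcont : Continuous γ := by
      simp only [hγdef]; fun_prop
    have hSopen : IsOpen S := isOpen_compl_singleton.preimage hγcont
    have hγder : ∀ t : ℝ, HasDerivAt γ v t := by
      intro t
      simpa [hγdef] using ((hasDerivAt_id t).smul_const v).const_add η
    set h : ℝ → ℝ := fun t => H (γ t) with hhdef
    set g : ℝ → ℝ := fun t => fderiv ℝ H (γ t) v with hgdef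
    set P : ℝ → ℝ := fun t => fderiv ℝ F (γ t) v with hPdef
    set φ : ℝ → ℝ := fun t => ⟪𝒜 (γ t), v⟫ with hφdef
    have hht : ∀ t ∈ S, 0 < h t := fun t ht => hHpos _ ht
    have hhd : ∀ t ∈ S, HasDerivAt h (g t) t := fun t ht =>
      (hHd _ ht).hasFDerivAt.comp_hasDerivAt t (hγder t)
    have hPd : ∀ t ∈ S, HasDerivAt P (fderiv ℝ (fderiv ℝ F) (γ t) v v) t := by
      intro t ht
      have h1 : HasDerivAt (fun s => fderiv ℝ F (γ s)) (fderiv ℝ (fderiv ℝ F) (γ t) v) t :=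
        (hFd2 _ ht).hasFDerivAt.comp_hasDerivAt t (hγder t)
      exact ((ContinuousLinearMap.apply ℝ ℝ v).hasFDerivAt.comp_hasDerivAt t h1 : _)
    have hgd : ∀ t ∈ S, HasDerivAt g (fderiv ℝ (fderiv ℝ H) (γ t) v v) t := by
      intro t ht
      have h1 : HasDerivAt (fun s => fderiv ℝ H (γ s)) (fderiv ℝ (fderiv ℝ H) (γ t) v) t :=
        (hHd2 _ ht).hasFDerivAt.comp_hasDerivAt t (hγder t)
      exact ((ContinuousLinearMap.apply ℝ ℝ v).hasFDerivAt.comp_hasDerivAt t h1 : _)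
    -- convexity of H, hence of h
    have hHconv : ConvexOn ℝ Set.univ H := by
      refine ⟨convex_univ, ?_⟩
      intro x _ y _ p q hp hq hpq
      calc H (p • x + q • y) ≤ H (p • x) + H (q • y) := htri _ _
        _ = p * H x + q * H y := by rw [hhom, hhom, abs_of_nonneg hp, abs_of_nonneg hq]
    have hhconv : ConvexOn ℝ Set.univ h := by
      have h1 := hHconv.comp_affineMap (AffineMap.lineMap η (η + v))
      have he : h = H ∘ (AffineMap.lineMap η (η + v)) := by
        funext t
        simp only [hhdef, hγdef, Function.comp_apply, AffineMap.lineMap_apply,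
          vsub_eq_sub, vadd_eq_add]
        congr 1
        module
      rw [he]
      simpa using h1
    -- monotonicity of g on S
    have hgmono : ∀ t₁ ∈ S, ∀ t₂ ∈ S, t₁ < t₂ → g t₁ ≤ g t₂ := by
      intro t₁ h₁ t₂ h₂ hlt
      have s1 := hhconv.le_slope_of_hasDerivAt (Set.mem_univ t₁) (Set.mem_univ t₂) hlt
        (hhd t₁ h₁)
      have s2 := hhconv.slope_le_of_hasDerivAt (Set.mem_univ t₁) (Set.mem_univ t₂) hlt
        (hhd t₂ h₂)
      linarith
    -- second derivative of h is nonnegative on S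
    have hR : ∀ t ∈ S, 0 ≤ fderiv ℝ (fderiv ℝ H) (γ t) v v := by
      intro t ht
      have htend : Filter.Tendsto (slope g t) (nhdsWithin t (Set.Ioi t))
          (nhds (fderiv ℝ (fderiv ℝ H) (γ t) v v)) :=
        (hasDerivAt_iff_tendsto_slope.1 (hgd t ht)).mono_left
          (nhdsWithin_mono t (fun y hy => Set.mem_compl_singleton_iff.mpr hy.ne'))
      refine ge_of_tendsto htend ?_
      have hSnh : ∀ᶠ y in nhds t, y ∈ S := hSopen.mem_nhds ht |>
        Filter.eventually_iff.2 ∘ (by simpa using ·)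
      filter_upwards [Filter.eventually_iff_exists_mem.mpr
        ⟨_, self_mem_nhdsWithin, fun y hy => hy⟩, hSnh.filter_mono nhdsWithin_le_nhds]
        with y hyt hyS
      rw [slope_def_field]
      have hmy : g t ≤ g y := hgmono t ht y hyS hyt
      have : (0:ℝ) < y - t := sub_pos.2 hyt
      exact div_nonneg (by linarith) this.le
    -- relation P = 2 h g on S
    have hgP : ∀ s ∈ S, P s = 2 * h s * g s := fun s hs => hFderiv _ hs v
    -- pointwise positivity of derivative of φ
    have hφder : ∀ t ∈ S, HasDerivAt φ
        (deriv a (h t) * h t * g t ^ 2 + a (h t) * ((1 / 2) *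
          fderiv ℝ (fderiv ℝ F) (γ t) v v)) t := by
      intro t ht
      have hA : HasDerivAt (fun s => a (h s)) (deriv a (h t) * g t) t :=
        (hadiff (h t) (hht t ht)).hasDerivAt.comp t (hhd t ht)
      have hprod : HasDerivAt (fun s => a (h s) * ((1 / 2 : ℝ) * P s))
          (deriv a (h t) * g t * ((1 / 2) * P t) +
            a (h t) * ((1 / 2) * fderiv ℝ (fderiv ℝ F) (γ t) v v)) t :=
        hA.mul ((hPd t ht).const_mul (1 / 2))
      have hev : φ =ᶠ[nhds t] fun s => a (h s) * ((1 / 2 : ℝ) * P s) := by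
        have hSnh : ∀ᶠ y in nhds t, y ∈ S := hSopen.mem_nhds ht |>
          Filter.eventually_iff.2 ∘ (by simpa using ·)
        filter_upwards [hSnh] with s hs
        show ⟪𝒜 (γ s), v⟫ = a (h s) * ((1 / 2 : ℝ) * P s)
        rw [h𝒜 (γ s) hs, real_inner_smul_left, real_inner_smul_left, hgradpair]
      have h2 := (Filter.EventuallyEq.hasDerivAt_iff hev).2 hprod
      refine HasDerivAt.congr_deriv h2 ?_
      rw [hgP t ht]
      ring
    have hφpos : ∀ t ∈ S, 0 < deriv a (h t) * h t * g t ^ 2 + a (h t) * ((1 / 2) *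
        fderiv ℝ (fderiv ℝ F) (γ t) v v) := by
      intro t ht
      set A : ℝ := a (h t) with hAdef
      have hA : 0 < A := ha _ (hht t ht)
      set Q : ℝ := (1 / 2) * fderiv ℝ (fderiv ℝ F) (γ t) v v with hQdef
      have hQl : lam * ‖v‖ ^ 2 ≤ Q := by
        have := (hell (γ t) ht v).1
        rwa [iteratedFDeriv_two_apply, show (![v, v] : Fin 2 → EuclideanSpace ℝ (Fin n)) 0 = v from rfl,
          show (![v, v] : Fin 2 → EuclideanSpace ℝ (Fin n)) 1 = v from rfl] at this
      have hQpos : 0 < Q :=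
        lt_of_lt_of_le (mul_pos hlam (pow_pos (norm_pos_iff.mpr hv) 2)) hQl
      -- g t ^ 2 ≤ Q
      have hg2 : g t ^ 2 ≤ Q := by
        have hprod : HasDerivAt (fun s => 2 * (h s * g s))
            (2 * (g t * g t + h t * fderiv ℝ (fderiv ℝ H) (γ t) v v)) t :=
          ((hhd t ht).mul (hgd t ht)).const_mul 2
        have hev : P =ᶠ[nhds t] fun s => 2 * (h s * g s) := by
          have hSnh : ∀ᶠ y in nhds t, y ∈ S := hSopen.mem_nhds ht |>
            Filter.eventually_iff.2 ∘ (by simpa using ·)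
          filter_upwards [hSnh] with s hs
          rw [hgP s hs]; ring
        have h2 := (Filter.EventuallyEq.hasDerivAt_iff hev).2 hprod
        have h3 := (hPd t ht).unique h2
        have h4 : Q = g t ^ 2 + h t * fderiv ℝ (fderiv ℝ H) (γ t) v v := by
          rw [hQdef, h3]; ring
        have h5 : 0 ≤ h t * fderiv ℝ (fderiv ℝ H) (γ t) v v :=
          mul_nonneg (hht t ht).le (hR t ht)
        linarith
      -- lower bound for a' term
      have hlow' : ia * A ≤ h t * deriv a (h t) := by
        have h6 := hlow (h t) (hht t ht)
        have h7 := mul_le_mul_of_nonneg_right h6 hA.le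
        rwa [div_mul_cancel₀ _ hA.ne'] at h7
      have hg2nonneg : (0:ℝ) ≤ g t ^ 2 := sq_nonneg _
      have q1 : ia * A * g t ^ 2 ≤ h t * deriv a (h t) * g t ^ 2 :=
        mul_le_mul_of_nonneg_right hlow' hg2nonneg
      rcases le_or_gt 0 ia with hia0 | hia0
      · have q2 : 0 ≤ ia * A * g t ^ 2 :=
          mul_nonneg (mul_nonneg hia0 hA.le) hg2nonneg
        have q3 : 0 < A * Q := mul_pos hA hQpos
        linarith [q1, q2, q3]
      · have hiaA : ia * A < 0 := mul_neg_of_neg_of_pos hia0 hA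
        have q2 : ia * A * Q ≤ ia * A * g t ^ 2 :=
          mul_le_mul_of_nonpos_left hg2 hiaA.le
        have q3 : 0 < (1 + ia) * (A * Q) :=
          mul_pos (by linarith) (mul_pos hA hQpos)
        linarith [q1, q2, q3]
    -- strict monotonicity of φ on [0,1]
    have hIccS : Set.Icc (0:ℝ) 1 ⊆ S := fun t ht => hS t ht
    have hmono : StrictMonoOn φ (Set.Icc (0:ℝ) 1) := by
      apply strictMonoOn_of_deriv_pos (convex_Icc 0 1)
      · intro t ht
        exact (hφder t (hIccS ht)).continuousAt.continuousWithinAt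
      · intro t ht
        rw [interior_Icc] at ht
        have htS : t ∈ S := hIccS ⟨ht.1.le, ht.2.le⟩
        rw [(hφder t htS).deriv]
        exact hφpos t htS
    have h01 := hmono (Set.left_mem_Icc.2 zero_le_one) (Set.right_mem_Icc.2 zero_le_one)
      zero_lt_one
    have hφ0 : φ 0 = ⟪𝒜 η, v⟫ := by rw [hφdef]; simp only; rw [hγ0]
    have hφ1 : φ 1 = ⟪𝒜 ξ, v⟫ := by rw [hφdef]; simp only; rw [hγ1]
    rw [inner_sub_left]
    rw [hφ0, hφ1] at h01
    linarith
end
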